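/- Suppose L: R^N → R is twice continuously differentiable, attains its minimum at w* with ∇L(w*) = 0 and Hessian H*, and E[(w^t − w*)(w^t − w*)ᵀ] = (1/t) F⁻¹ + O(1/t²) with H* = F positive definite. If additionally E[‖w^t − w*‖³] = O(t^{-3/2}), then E[L(w^t)] − L(w*) = N/(2t) + O(t^{-3/2}). -/

import Mathlib

open MeasureTheory Matrix

/-- If `L` is minimized at `w*` with `∇L(w*) = 0` and Hessian
`H* = F` positive definite (second-order Taylor expansion with cubic
remainder), and the iterates satisfy `E[(wᵗ−w*)(wᵗ−w*)ᵀ] = (1/t) F⁻¹ + O(1/t²)`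
and `E[‖wᵗ−w*‖³] = O(t^{-3/2})`, then
`E[L(wᵗ)] − L(w*) = N/(2t) + O(t^{-3/2})`. -/
theorem fedes_loss_rate
    {N : ℕ} {Ω : Type*} [MeasurableSpace Ω] (P : Measure Ω) [IsProbabilityMeasure P]
    (L : (Fin N → ℝ) → ℝ) (wstar : Fin N → ℝ)
    (F : Matrix (Fin N) (Fin N) ℝ) (hF : F.PosDef)
    (R : (Fin N → ℝ) → ℝ) (cR : ℝ)
    -- second-order Taylor expansion of L around its minimizer w*, Hessian H* = F
    (hTaylor : ∀ w, L w - L wstar =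
      (1 / 2) * ((w - wstar) ⬝ᵥ F.mulVec (w - wstar)) + R w)
    (hR : ∀ w, |R w| ≤ cR * (∑ i, (w i - wstar i) ^ 2) ^ ((3 : ℝ) / 2))
    (w : ℕ → Ω → Fin N → ℝ)
    (hint : ∀ t, Integrable (fun ω => L (w t ω)) P)
    -- covariance: E[(wᵗ−w*)(wᵗ−w*)ᵀ] = (1/t) F⁻¹ + O(1/t²)
    (c₂ : ℝ)
    (hcov : ∀ t : ℕ, 1 ≤ t → ∀ i j : Fin N,
      Integrable (fun ω => (w t ω i - wstar i) * (w t ω j - wstar j)) P ∧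
      |(∫ ω, (w t ω i - wstar i) * (w t ω j - wstar j) ∂P) - (1 / (t : ℝ)) * F⁻¹ i j|
        ≤ c₂ / (t : ℝ) ^ 2)
    -- third moment: E[‖wᵗ−w*‖³] = O(t^{-3/2})
    (c₃ : ℝ)
    (hmom3 : ∀ t : ℕ, 1 ≤ t →
      Integrable (fun ω => (∑ i, (w t ω i - wstar i) ^ 2) ^ ((3 : ℝ) / 2)) P ∧
      (∫ ω, (∑ i, (w t ω i - wstar i) ^ 2) ^ ((3 : ℝ) / 2) ∂P)
        ≤ c₃ * (t : ℝ) ^ (-(3 : ℝ) / 2)) :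
    ∃ c : ℝ, ∃ T : ℕ, ∀ t : ℕ, T ≤ t →
      |(∫ ω, L (w t ω) ∂P) - L wstar - (N : ℝ) / (2 * t)|
        ≤ c * (t : ℝ) ^ (-(3 : ℝ) / 2) := by

  classical
  refine ⟨(∑ i, ∑ j, |F i j|) * |c₂| / 2 + |cR| * |c₃|, 1, fun t ht => ?_⟩
  have ht1 : (1:ℝ) ≤ (t:ℝ) := by exact_mod_cast ht
  have htpos : (0:ℝ) < (t:ℝ) := lt_of_lt_of_le one_pos ht1
  -- symmetry of F
  have hFsymm : ∀ i j, F j i = F i j := fun i j => by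
    have := congrFun (congrFun hF.1 i) j
    simpa [Matrix.conjTranspose_apply] using this
  -- trace identity
  have hFinv : F * F⁻¹ = 1 :=
    Matrix.mul_nonsing_inv F (isUnit_iff_ne_zero.mpr (ne_of_gt hF.det_pos))
  have htr : ∑ i, ∑ j, F i j * F⁻¹ i j = (N : ℝ) := by
    calc ∑ i, ∑ j, F i j * F⁻¹ i j
        = ∑ j, ∑ i, F i j * F⁻¹ i j := Finset.sum_comm
      _ = ∑ i, ∑ j, F i j * F⁻¹ j i := by
          refine Finset.sum_congr rfl fun i _ => Finset.sum_congr rfl fun j _ => ?_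
          rw [hFsymm]
      _ = ∑ i, (F * F⁻¹) i i := by
          refine Finset.sum_congr rfl fun i _ => ?_
          rw [Matrix.mul_apply]
      _ = (N : ℝ) := by
          rw [hFinv]
          simp [Matrix.one_apply]
  -- abbreviations for fixed t
  have hXint : ∀ i j : Fin N,
      Integrable (fun ω => (w t ω i - wstar i) * (w t ω j - wstar j)) P :=
    fun i j => (hcov t ht i j).1
  have hquad : ∀ ω, (w t ω - wstar) ⬝ᵥ F.mulVec (w t ω - wstar)
      = ∑ i, ∑ j, F i j * ((w t ω i - wstar i) * (w t ω j - wstar j)) := by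
    intro ω
    simp only [dotProduct, Matrix.mulVec, Pi.sub_apply, Finset.mul_sum]
    exact Finset.sum_congr rfl fun i _ => Finset.sum_congr rfl fun j _ => by ring
  have hquadInt : Integrable
      (fun ω => ∑ i, ∑ j, F i j * ((w t ω i - wstar i) * (w t ω j - wstar j))) P := by
    refine integrable_finset_sum _ fun i _ => integrable_finset_sum _ fun j _ => ?_
    exact (hXint i j).const_mul _
  have hRint : Integrable (fun ω => R (w t ω)) P := by
    have h2 : (fun ω => R (w t ω))
        = fun ω => (L (w t ω) - L wstar)
          - (1/2) * (∑ i, ∑ j, F i j * ((w t ω i - wstar i) * (w t ω j - wstar j))) := by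
      funext ω
      have := hTaylor (w t ω)
      rw [hquad ω] at this
      linarith [this]
    rw [h2]
    exact ((hint t).sub (integrable_const _)).sub (hquadInt.const_mul _)
  -- integral identity
  have hI : (∫ ω, L (w t ω) ∂P) - L wstar
      = (1/2) * (∑ i, ∑ j, F i j * ∫ ω, (w t ω i - wstar i) * (w t ω j - wstar j) ∂P)
        + ∫ ω, R (w t ω) ∂P := by
    have e1 : (∫ ω, L (w t ω) ∂P) - L wstar = ∫ ω, (L (w t ω) - L wstar) ∂P := by
      rw [integral_sub (hint t) (integrable_const _)]
      simp
    rw [e1]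
    have e2 : (fun ω => L (w t ω) - L wstar)
        = fun ω => (1/2) * (∑ i, ∑ j, F i j * ((w t ω i - wstar i) * (w t ω j - wstar j)))
          + R (w t ω) := by
      funext ω
      rw [hTaylor (w t ω), hquad ω]
    rw [e2, integral_add (hquadInt.const_mul _) hRint, integral_const_mul]
    congr 1
    congr 1
    rw [integral_finset_sum _ (fun i _ =>
      integrable_finset_sum _ (fun j _ => (hXint i j).const_mul (F i j)))]
    refine Finset.sum_congr rfl fun i _ => ?_
    rw [integral_finset_sum _ (fun j _ => (hXint i j).const_mul (F i j))]
    exact Finset.sum_congr rfl fun j _ => integral_const_mul _ _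
  have hNt : ∑ i, ∑ j, F i j * ((1/(t:ℝ)) * F⁻¹ i j) = (N:ℝ)/(t:ℝ) := by
    have e : ∑ i, ∑ j, F i j * ((1/(t:ℝ)) * F⁻¹ i j)
        = (1/(t:ℝ)) * ∑ i, ∑ j, F i j * F⁻¹ i j := by
      rw [Finset.mul_sum]
      refine Finset.sum_congr rfl fun i _ => ?_
      rw [Finset.mul_sum]
      exact Finset.sum_congr rfl fun j _ => by ring
    rw [e, htr]
    ring
  have key : (∫ ω, L (w t ω) ∂P) - L wstar - (N:ℝ)/(2*(t:ℝ))
      = (1/2) * (∑ i, ∑ j, F i j *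
          ((∫ ω, (w t ω i - wstar i) * (w t ω j - wstar j) ∂P) - (1/(t:ℝ)) * F⁻¹ i j))
        + ∫ ω, R (w t ω) ∂P := by
    have expand : ∑ i, ∑ j, F i j *
          ((∫ ω, (w t ω i - wstar i) * (w t ω j - wstar j) ∂P) - (1/(t:ℝ)) * F⁻¹ i j)
        = (∑ i, ∑ j, F i j * ∫ ω, (w t ω i - wstar i) * (w t ω j - wstar j) ∂P)
          - ∑ i, ∑ j, F i j * ((1/(t:ℝ)) * F⁻¹ i j) := by
      simp only [mul_sub, Finset.sum_sub_distrib]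
    rw [hI, expand, hNt]
    field_simp
    ring
  -- bounds
  have hpow : 1/(t:ℝ)^2 ≤ (t:ℝ) ^ (-(3:ℝ)/2) := by
    have h1 : (t:ℝ) ^ (-2:ℝ) ≤ (t:ℝ) ^ (-(3:ℝ)/2) :=
      Real.rpow_le_rpow_of_exponent_le ht1 (by norm_num)
    have h2 : (t:ℝ) ^ (-2:ℝ) = 1/(t:ℝ)^2 := by
      rw [Real.rpow_neg (le_of_lt htpos), one_div]
      congr 1
      rw [← Real.rpow_natCast (t:ℝ) 2]
      norm_num
    linarith [h1, h2.symm.le]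
  have htneg : (0:ℝ) ≤ (t:ℝ) ^ (-(3:ℝ)/2) := Real.rpow_nonneg (le_of_lt htpos) _
  have hD : |∑ i, ∑ j, F i j *
        ((∫ ω, (w t ω i - wstar i) * (w t ω j - wstar j) ∂P) - (1/(t:ℝ)) * F⁻¹ i j)|
      ≤ (∑ i, ∑ j, |F i j|) * (|c₂| * (t:ℝ) ^ (-(3:ℝ)/2)) := by
    have step1 : |∑ i, ∑ j, F i j *
          ((∫ ω, (w t ω i - wstar i) * (w t ω j - wstar j) ∂P) - (1/(t:ℝ)) * F⁻¹ i j)|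
        ≤ ∑ i, ∑ j, |F i j| * (|c₂| * (t:ℝ) ^ (-(3:ℝ)/2)) := by
      refine le_trans (Finset.abs_sum_le_sum_abs _ _) ?_
      refine Finset.sum_le_sum fun i _ => ?_
      refine le_trans (Finset.abs_sum_le_sum_abs _ _) ?_
      refine Finset.sum_le_sum fun j _ => ?_
      rw [abs_mul]
      refine mul_le_mul_of_nonneg_left ?_ (abs_nonneg _)
      have hb := (hcov t ht i j).2
      have : c₂ / (t:ℝ)^2 ≤ |c₂| * (t:ℝ) ^ (-(3:ℝ)/2) := by
        calc c₂ / (t:ℝ)^2 ≤ |c₂| / (t:ℝ)^2 := by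
              apply div_le_div_of_nonneg_right (le_abs_self c₂)
              positivity
          _ = |c₂| * (1/(t:ℝ)^2) := by ring
          _ ≤ |c₂| * ((t:ℝ) ^ (-(3:ℝ)/2)) := by
              exact mul_le_mul_of_nonneg_left hpow (abs_nonneg _)
      linarith [hb]
    calc _ ≤ ∑ i, ∑ j, |F i j| * (|c₂| * (t:ℝ) ^ (-(3:ℝ)/2)) := step1
      _ = (∑ i, ∑ j, |F i j|) * (|c₂| * (t:ℝ) ^ (-(3:ℝ)/2)) := by
          rw [Finset.sum_mul]
          exact Finset.sum_congr rfl fun i _ => (Finset.sum_mul _ _ _).symm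
  have hRbound : |∫ ω, R (w t ω) ∂P| ≤ |cR| * (|c₃| * (t:ℝ) ^ (-(3:ℝ)/2)) := by
    have habs : |∫ ω, R (w t ω) ∂P| ≤ ∫ ω, |R (w t ω)| ∂P := by
      simpa [Real.norm_eq_abs] using norm_integral_le_integral_norm (fun ω => R (w t ω))
    have hmono : ∫ ω, |R (w t ω)| ∂P
        ≤ ∫ ω, cR * (∑ i, (w t ω i - wstar i) ^ 2) ^ ((3:ℝ)/2) ∂P := by
      refine integral_mono hRint.abs ((hmom3 t ht).1.const_mul cR) fun ω => hR (w t ω)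
    have hmnn : 0 ≤ ∫ ω, (∑ i, (w t ω i - wstar i) ^ 2) ^ ((3:ℝ)/2) ∂P := by
      refine integral_nonneg fun ω => ?_
      exact Real.rpow_nonneg (Finset.sum_nonneg fun i _ => sq_nonneg _) _
    have h1 : cR * (∫ ω, (∑ i, (w t ω i - wstar i) ^ 2) ^ ((3:ℝ)/2) ∂P)
        ≤ |cR| * (|c₃| * (t:ℝ) ^ (-(3:ℝ)/2)) := by
      have h2 : (∫ ω, (∑ i, (w t ω i - wstar i) ^ 2) ^ ((3:ℝ)/2) ∂P)
          ≤ |c₃| * (t:ℝ) ^ (-(3:ℝ)/2) := by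
        refine le_trans (hmom3 t ht).2 ?_
        exact mul_le_mul_of_nonneg_right (le_abs_self c₃) htneg
      calc cR * (∫ ω, (∑ i, (w t ω i - wstar i) ^ 2) ^ ((3:ℝ)/2) ∂P)
          ≤ |cR| * (∫ ω, (∑ i, (w t ω i - wstar i) ^ 2) ^ ((3:ℝ)/2) ∂P) :=
            mul_le_mul_of_nonneg_right (le_abs_self cR) hmnn
        _ ≤ |cR| * (|c₃| * (t:ℝ) ^ (-(3:ℝ)/2)) :=
            mul_le_mul_of_nonneg_left h2 (abs_nonneg _)
    calc |∫ ω, R (w t ω) ∂P| ≤ ∫ ω, |R (w t ω)| ∂P := habs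
      _ ≤ ∫ ω, cR * (∑ i, (w t ω i - wstar i) ^ 2) ^ ((3:ℝ)/2) ∂P := hmono
      _ = cR * (∫ ω, (∑ i, (w t ω i - wstar i) ^ 2) ^ ((3:ℝ)/2) ∂P) := integral_const_mul _ _
      _ ≤ |cR| * (|c₃| * (t:ℝ) ^ (-(3:ℝ)/2)) := h1
  have goalEq : (N:ℝ)/(2*(t:ℝ)) = (N:ℝ)/(2*(t:ℝ)) := rfl
  rw [key]
  calc |(1/2) * (∑ i, ∑ j, F i j *
          ((∫ ω, (w t ω i - wstar i) * (w t ω j - wstar j) ∂P) - (1/(t:ℝ)) * F⁻¹ i j))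
        + ∫ ω, R (w t ω) ∂P|
      ≤ |(1/2) * (∑ i, ∑ j, F i j *
          ((∫ ω, (w t ω i - wstar i) * (w t ω j - wstar j) ∂P) - (1/(t:ℝ)) * F⁻¹ i j))|
        + |∫ ω, R (w t ω) ∂P| := abs_add_le _ _
    _ ≤ (1/2) * ((∑ i, ∑ j, |F i j|) * (|c₂| * (t:ℝ) ^ (-(3:ℝ)/2)))
        + |cR| * (|c₃| * (t:ℝ) ^ (-(3:ℝ)/2)) := by
        rw [abs_mul]
        have : |(1:ℝ)/2| = 1/2 := by norm_num
        rw [this]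
        exact add_le_add (mul_le_mul_of_nonneg_left hD (by norm_num)) hRbound
    _ = ((∑ i, ∑ j, |F i j|) * |c₂| / 2 + |cR| * |c₃|) * (t:ℝ) ^ (-(3:ℝ)/2) := by ring
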